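/- Let I be a consistently-refined-typed instance of SRTI in which every type's preference ordering over types is strict (no type is indifferent between two distinct types). Then all stable matchings of I (if any exist) have the same cardinality. -/

import Mathlib

set_option linter.unusedSectionVars false
set_option maxHeartbeats 1000000

namespace SRTI7

variable {Agent : Type} [Fintype Agent] [DecidableEq Agent]


/-- Coarse (type-level) stability. -/
def CStab (typeOf : Agent → ℕ) (trank : ℕ → ℕ → ℕ) (k : ℕ) (M : Agent → Agent) : Prop :=
  ¬ ∃ a b : Agent, a ≠ b ∧ M a ≠ b ∧
    (if M a = a then trank (typeOf a) (typeOf b) < trank (typeOf a) k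
     else trank (typeOf a) (typeOf b) < trank (typeOf a) (typeOf (M a))) ∧
    (if M b = b then trank (typeOf b) (typeOf a) < trank (typeOf b) k
     else trank (typeOf b) (typeOf a) < trank (typeOf b) (typeOf (M b)))

/-- Coarse acceptability of all matched partners. -/
def CAcc (typeOf : Agent → ℕ) (trank : ℕ → ℕ → ℕ) (k : ℕ) (M : Agent → Agent) : Prop :=
  ∀ a, M a ≠ a → trank (typeOf a) (typeOf (M a)) < trank (typeOf a) k

lemma typeOf_swap (typeOf : Agent → ℕ) {u v : Agent} (h : typeOf u = typeOf v) (z : Agent) :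
    typeOf (Equiv.swap u v z) = typeOf z := by
  rcases eq_or_ne z u with rfl | hu
  · rw [Equiv.swap_apply_left]; exact h.symm
  rcases eq_or_ne z v with rfl | hv
  · rw [Equiv.swap_apply_right]; exact h
  · rw [Equiv.swap_apply_of_ne_of_ne hu hv]

lemma swap_conj_invol {u v : Agent} (M : Agent → Agent) (hMi : ∀ a, M (M a) = a) :
    ∀ a, (fun z => Equiv.swap u v (M (Equiv.swap u v z)))
      ((fun z => Equiv.swap u v (M (Equiv.swap u v z))) a) = a := by
  intro a
  simp [Equiv.swap_apply_self, hMi]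

lemma swap_conj_partner {u v : Agent} (M : Agent → Agent) (a : Agent) :
    M (Equiv.swap u v a) = Equiv.swap u v ((fun z => Equiv.swap u v (M (Equiv.swap u v z))) a) := by
  simp [Equiv.swap_apply_self]

lemma cacc_swap (typeOf : Agent → ℕ) (trank : ℕ → ℕ → ℕ) (k : ℕ) {u v : Agent}
    (h : typeOf u = typeOf v) (M : Agent → Agent)
    (hacc : CAcc typeOf trank k M) :
    CAcc typeOf trank k (fun z => Equiv.swap u v (M (Equiv.swap u v z))) := by
  intro a ha
  have h1 : M (Equiv.swap u v a) ≠ Equiv.swap u v a := by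
    intro he
    apply ha
    show Equiv.swap u v (M (Equiv.swap u v a)) = a
    rw [he, Equiv.swap_apply_self]
  have h2 := hacc _ h1
  rwa [typeOf_swap typeOf h, show typeOf (M (Equiv.swap u v a))
      = typeOf ((fun z => Equiv.swap u v (M (Equiv.swap u v z))) a) by
    rw [swap_conj_partner M a, typeOf_swap typeOf h]] at h2

lemma cstab_swap (typeOf : Agent → ℕ) (trank : ℕ → ℕ → ℕ) (k : ℕ) {u v : Agent}
    (h : typeOf u = typeOf v) (M : Agent → Agent)
    (hstab : CStab typeOf trank k M) :
    CStab typeOf trank k (fun z => Equiv.swap u v (M (Equiv.swap u v z))) := by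
  rintro ⟨a, b, hab, h1, h2, h3⟩
  set π := Equiv.swap u v with hπ
  set M'' := fun z => Equiv.swap u v (M (Equiv.swap u v z)) with hM''
  apply hstab
  refine ⟨π a, π b, fun he => hab (π.injective he), ?_, ?_, ?_⟩
  · intro he
    apply h1
    show π (M (π a)) = b
    rw [he, Equiv.swap_apply_self]
  · have e1 : typeOf (π a) = typeOf a := typeOf_swap typeOf h a
    have e2 : typeOf (π b) = typeOf b := typeOf_swap typeOf h b
    have e3 : typeOf (M (π a)) = typeOf (M'' a) := by
      rw [show M (π a) = π (M'' a) from swap_conj_partner M a, typeOf_swap typeOf h]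
    have e4 : (M (π a) = π a) ↔ (M'' a = a) := by
      constructor
      · intro he
        show π (M (π a)) = a
        rw [he, Equiv.swap_apply_self]
      · intro he
        have : π (M (π a)) = π (π a) := by rw [Equiv.swap_apply_self]; exact he
        exact π.injective this
    rw [e1, e2, e3]
    split_ifs with hc
    · rw [if_pos (e4.mp hc)] at h2; exact h2
    · rw [if_neg (fun hc' => hc (e4.mpr hc'))] at h2; exact h2
  · have e1 : typeOf (π b) = typeOf b := typeOf_swap typeOf h b
    have e2 : typeOf (π a) = typeOf a := typeOf_swap typeOf h a
    have e3 : typeOf (M (π b)) = typeOf (M'' b) := by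
      rw [show M (π b) = π (M'' b) from swap_conj_partner M b, typeOf_swap typeOf h]
    have e4 : (M (π b) = π b) ↔ (M'' b = b) := by
      constructor
      · intro he
        show π (M (π b)) = b
        rw [he, Equiv.swap_apply_self]
      · intro he
        have : π (M (π b)) = π (π b) := by rw [Equiv.swap_apply_self]; exact he
        exact π.injective this
    rw [e1, e2, e3]
    split_ifs with hc
    · rw [if_pos (e4.mp hc)] at h3; exact h3
    · rw [if_neg (fun hc' => hc (e4.mpr hc'))] at h3; exact h3

lemma tie_types (typeOf : Agent → ℕ) (trank : ℕ → ℕ → ℕ) (k : ℕ)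
    (htype : ∀ a, typeOf a < k)
    (hstrict : ∀ i j l, i < k → j < k → l < k → j ≠ l →
        trank i j < trank i k → trank i l < trank i k → trank i j ≠ trank i l)
    {a b c : Agent}
    (hlt : trank (typeOf a) (typeOf b) < trank (typeOf a) k)
    (heq : trank (typeOf a) (typeOf b) = trank (typeOf a) (typeOf c)) :
    typeOf b = typeOf c := by
  by_contra hne
  exact hstrict (typeOf a) (typeOf b) (typeOf c) (htype a) (htype b) (htype c) hne hlt
    (heq ▸ hlt) heq

lemma no_bad_path (typeOf : Agent → ℕ) (trank : ℕ → ℕ → ℕ) (k : ℕ)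
    (htype : ∀ a, typeOf a < k)
    (hstrict : ∀ i j l, i < k → j < k → l < k → j ≠ l →
        trank i j < trank i k → trank i l < trank i k → trank i j ≠ trank i l) :
    ∀ n : ℕ, n % 2 = 1 →
    ∀ (M M' : Agent → Agent) (x : ℕ → Agent),
      (∀ a, M (M a) = a) → (∀ a, M' (M' a) = a) →
      CAcc typeOf trank k M → CAcc typeOf trank k M' →
      CStab typeOf trank k M → CStab typeOf trank k M' →
      (∀ p q, p < q → q ≤ n → x p ≠ x q) →
      (∀ j, j < n → j % 2 = 0 → M (x j) = x (j+1)) →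
      (∀ j, j < n → j % 2 = 1 → M' (x j) = x (j+1)) →
      M' (x 0) = x 0 → M' (x n) = x n → False := by
  intro n
  induction n using Nat.strong_induction_on with
  | _ n IH =>
  intro hn M M' x hMi hM'i caccM caccM' cstabM cstabM' hdist hMe hM'e h0 hnn
  rcases Nat.lt_or_ge n 3 with hn3 | hn3
  · -- n = 1
    have hn1 : n = 1 := by omega
    subst hn1
    have e1 : M (x 0) = x 1 := hMe 0 (by omega) (by omega)
    have d01 : x 0 ≠ x 1 := hdist 0 1 (by omega) (by omega)
    apply cstabM'
    refine ⟨x 0, x 1, d01, ?_, ?_, ?_⟩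
    · rw [h0]; exact d01
    · rw [if_pos h0]
      have := caccM (x 0) (by rw [e1]; exact d01.symm)
      rwa [e1] at this
    · rw [if_pos hnn]
      have e2 : M (x 1) = x 0 := by rw [← e1, hMi]
      have := caccM (x 1) (by rw [e2]; exact d01)
      rwa [e2] at this
  · -- n ≥ 3
    have claim : ∀ i, 1 ≤ i → i ≤ n - 1 →
        trank (typeOf (x i)) (typeOf (x (i+1))) < trank (typeOf (x i)) (typeOf (x (i-1)))
        := by
      intro i
      induction i using Nat.strong_induction_on with
      | _ i IHi =>
      intro hi1 hin
      rcases Nat.mod_two_eq_zero_or_one i with hpar | hpar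
      · -- i even, i ≥ 2; pair (x (i-1), x i) tested against M
        have hi2 : 2 ≤ i := by omega
        have hM'a : M' (x (i-1)) = x i := by
          have := hM'e (i-1) (by omega) (by omega)
          rwa [show i - 1 + 1 = i by omega] at this
        have hMa : M (x (i-1)) = x (i-2) := by
          have h1 : M (x (i-2)) = x (i-1) := by
            have := hMe (i-2) (by omega) (by omega)
            rwa [show i - 2 + 1 = i - 1 by omega] at this
          rw [← h1, hMi]
        have hMb : M (x i) = x (i+1) := hMe i (by omega) hpar
        have dprev : x (i-2) ≠ x (i-1) := hdist (i-2) (i-1) (by omega) (by omega)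
        have dnext : x i ≠ x (i+1) := hdist i (i+1) (by omega) (by omega)
        have hweak : trank (typeOf (x i)) (typeOf (x (i+1)))
            ≤ trank (typeOf (x i)) (typeOf (x (i-1))) := by
          by_contra hlt
          push_neg at hlt
          apply cstabM
          refine ⟨x (i-1), x i, hdist (i-1) i (by omega) (by omega), ?_, ?_, ?_⟩
          · rw [hMa]; exact hdist (i-2) i (by omega) (by omega)
          · rw [if_neg (by rw [hMa]; exact dprev), hMa]
            have := IHi (i-1) (by omega) (by omega) (by omega)
            rwa [show i - 1 + 1 = i by omega, show i - 1 - 1 = i - 2 by omega] at this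
          · rw [if_neg (by rw [hMb]; exact dnext.symm), hMb]
            exact hlt
        rcases lt_or_eq_of_le hweak with hltc | heqc
        · exact hltc
        · -- tie: reduce
          exfalso
          have htEq : typeOf (x (i+1)) = typeOf (x (i-1)) :=
            tie_types typeOf trank k htype hstrict
              (by have := caccM (x i) (by rw [hMb]; exact dnext.symm); rwa [hMb] at this)
              heqc
          have hTuv : typeOf (x (i-1)) = typeOf (x (i+1)) := htEq.symm
          have hfix : ∀ t, t ≤ n → t ≠ i - 1 → t ≠ i + 1 →
              Equiv.swap (x (i-1)) (x (i+1)) (x t) = x t := by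
            intro t ht ht1 ht2
            apply Equiv.swap_apply_of_ne_of_ne
            · rcases Nat.lt_or_ge t (i-1) with h | h
              · exact hdist t (i-1) h (by omega)
              · exact (hdist (i-1) t (by omega) ht).symm
            · rcases Nat.lt_or_ge t (i+1) with h | h
              · exact hdist t (i+1) h (by omega)
              · exact (hdist (i+1) t (by omega) ht).symm
          refine IH (n-2) (by omega) (by omega)
            (fun z => Equiv.swap (x (i-1)) (x (i+1)) (M (Equiv.swap (x (i-1)) (x (i+1)) z)))
            M' (fun j => x (if j + 2 ≤ i then j else j + 2))
            (swap_conj_invol M hMi) hM'i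
            (cacc_swap typeOf trank k hTuv M caccM) caccM'
            (cstab_swap typeOf trank k hTuv M cstabM) cstabM'
            ?_ ?_ ?_ ?_ ?_
          · intro p q hpq hq
            have h1 : (if p+2 ≤ i then p else p+2) < (if q+2 ≤ i then q else q+2) := by
              split_ifs <;> omega
            have h2 : (if q+2 ≤ i then q else q+2) ≤ n := by
              split_ifs <;> omega
            exact hdist _ _ h1 h2
          · intro j hj hjp
            by_cases hj2 : j + 2 ≤ i
            · by_cases hj3 : j + 3 ≤ i
              · rw [if_pos hj2, if_pos (show j+1+2 ≤ i by omega)]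
                show Equiv.swap _ _ (M (Equiv.swap _ _ (x j))) = x (j+1)
                rw [hfix j (by omega) (by omega) (by omega),
                  hMe j (by omega) hjp,
                  hfix (j+1) (by omega) (by omega) (by omega)]
              · rw [if_pos hj2, if_neg (show ¬(j+1+2 ≤ i) by omega)]
                show Equiv.swap _ _ (M (Equiv.swap _ _ (x j))) = x (j+1+2)
                rw [hfix j (by omega) (by omega) (by omega),
                  hMe j (by omega) hjp]
                have e1 : j + 1 + 2 = i + 1 := by omega
                have e2 : j + 1 = i - 1 := by omega
                rw [e1, e2, Equiv.swap_apply_left]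
            · rw [if_neg hj2, if_neg (show ¬(j+1+2 ≤ i) by omega)]
              show Equiv.swap _ _ (M (Equiv.swap _ _ (x (j+2)))) = x (j+1+2)
              rw [hfix (j+2) (by omega) (by omega) (by omega),
                hMe (j+2) (by omega) (by omega)]
              have e1 : j + 1 + 2 = j + 3 := by omega
              rw [e1, hfix (j+3) (by omega) (by omega) (by omega)]
          · intro j hj hjp
            by_cases hj2 : j + 2 ≤ i
            · rw [if_pos hj2, if_pos (show j+1+2 ≤ i by omega)]
              exact hM'e j (by omega) hjp
            · rw [if_neg hj2, if_neg (show ¬(j+1+2 ≤ i) by omega)]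
              have e1 : j + 1 + 2 = j + 2 + 1 := by omega
              rw [e1]
              exact hM'e (j+2) (by omega) (by omega)
          · rw [if_pos (show 0+2 ≤ i by omega)]
            exact h0
          · rw [if_neg (show ¬(n-2+2 ≤ i) by omega)]
            have e1 : n - 2 + 2 = n := by omega
            rw [e1]
            exact hnn
      · -- i odd; pair (x (i-1), x i) tested against M'
        have hMa : M (x (i-1)) = x i := by
          have := hMe (i-1) (by omega) (by omega)
          rwa [show i - 1 + 1 = i by omega] at this
        have hM'b : M' (x i) = x (i+1) := hM'e i (by omega) hpar
        have dnext : x i ≠ x (i+1) := hdist i (i+1) (by omega) (by omega)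
        have hweak : trank (typeOf (x i)) (typeOf (x (i+1)))
            ≤ trank (typeOf (x i)) (typeOf (x (i-1))) := by
          by_contra hlt
          push_neg at hlt
          apply cstabM'
          refine ⟨x (i-1), x i, hdist (i-1) i (by omega) (by omega), ?_, ?_, ?_⟩
          · rcases Nat.lt_or_ge i 2 with hi1' | hi2
            · have : i = 1 := by omega
              subst this
              rw [h0]
              exact hdist 0 1 (by omega) (by omega)
            · have hM'a : M' (x (i-1)) = x (i-2) := by
                have h1 : M' (x (i-2)) = x (i-1) := by
                  have := hM'e (i-2) (by omega) (by omega)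
                  rwa [show i - 2 + 1 = i - 1 by omega] at this
                rw [← h1, hM'i]
              rw [hM'a]
              exact hdist (i-2) i (by omega) (by omega)
          · rcases Nat.lt_or_ge i 2 with hi1' | hi2
            · have : i = 1 := by omega
              subst this
              rw [if_pos h0]
              have := caccM (x 0) (by rw [hMe 0 (by omega) (by omega)]
                                      exact (hdist 0 1 (by omega) (by omega)).symm)
              rwa [hMe 0 (by omega) (by omega)] at this
            · have hM'a : M' (x (i-1)) = x (i-2) := by
                have h1 : M' (x (i-2)) = x (i-1) := by
                  have := hM'e (i-2) (by omega) (by omega)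
                  rwa [show i - 2 + 1 = i - 1 by omega] at this
                rw [← h1, hM'i]
              have dprev : x (i-2) ≠ x (i-1) := hdist (i-2) (i-1) (by omega) (by omega)
              rw [if_neg (by rw [hM'a]; exact dprev), hM'a]
              have := IHi (i-1) (by omega) (by omega) (by omega)
              rwa [show i - 1 + 1 = i by omega, show i - 1 - 1 = i - 2 by omega] at this
          · rw [if_neg (by rw [hM'b]; exact dnext.symm), hM'b]
            exact hlt
        rcases lt_or_eq_of_le hweak with hltc | heqc
        · exact hltc
        · exfalso
          have htEq : typeOf (x (i+1)) = typeOf (x (i-1)) :=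
            tie_types typeOf trank k htype hstrict
              (by have := caccM' (x i) (by rw [hM'b]; exact dnext.symm); rwa [hM'b] at this)
              heqc
          have hTuv : typeOf (x (i-1)) = typeOf (x (i+1)) := htEq.symm
          have hfix : ∀ t, t ≤ n → t ≠ i - 1 → t ≠ i + 1 →
              Equiv.swap (x (i-1)) (x (i+1)) (x t) = x t := by
            intro t ht ht1 ht2
            apply Equiv.swap_apply_of_ne_of_ne
            · rcases Nat.lt_or_ge t (i-1) with h | h
              · exact hdist t (i-1) h (by omega)
              · exact (hdist (i-1) t (by omega) ht).symm
            · rcases Nat.lt_or_ge t (i+1) with h | h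
              · exact hdist t (i+1) h (by omega)
              · exact (hdist (i+1) t (by omega) ht).symm
          refine IH (n-2) (by omega) (by omega)
            M
            (fun z => Equiv.swap (x (i-1)) (x (i+1)) (M' (Equiv.swap (x (i-1)) (x (i+1)) z)))
            (fun j => x (if j + 2 ≤ i then j else j + 2))
            hMi (swap_conj_invol M' hM'i)
            caccM (cacc_swap typeOf trank k hTuv M' caccM')
            cstabM (cstab_swap typeOf trank k hTuv M' cstabM')
            ?_ ?_ ?_ ?_ ?_
          · intro p q hpq hq
            have h1 : (if p+2 ≤ i then p else p+2) < (if q+2 ≤ i then q else q+2) := by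
              split_ifs <;> omega
            have h2 : (if q+2 ≤ i then q else q+2) ≤ n := by
              split_ifs <;> omega
            exact hdist _ _ h1 h2
          · intro j hj hjp
            by_cases hj2 : j + 2 ≤ i
            · rw [if_pos hj2, if_pos (show j+1+2 ≤ i by omega)]
              exact hMe j (by omega) hjp
            · rw [if_neg hj2, if_neg (show ¬(j+1+2 ≤ i) by omega)]
              have e1 : j + 1 + 2 = j + 2 + 1 := by omega
              rw [e1]
              exact hMe (j+2) (by omega) (by omega)
          · intro j hj hjp
            by_cases hj2 : j + 2 ≤ i
            · by_cases hj3 : j + 3 ≤ i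
              · rw [if_pos hj2, if_pos (show j+1+2 ≤ i by omega)]
                show Equiv.swap _ _ (M' (Equiv.swap _ _ (x j))) = x (j+1)
                rw [hfix j (by omega) (by omega) (by omega),
                  hM'e j (by omega) hjp,
                  hfix (j+1) (by omega) (by omega) (by omega)]
              · rw [if_pos hj2, if_neg (show ¬(j+1+2 ≤ i) by omega)]
                show Equiv.swap _ _ (M' (Equiv.swap _ _ (x j))) = x (j+1+2)
                rw [hfix j (by omega) (by omega) (by omega),
                  hM'e j (by omega) hjp]
                have e1 : j + 1 + 2 = i + 1 := by omega
                have e2 : j + 1 = i - 1 := by omega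
                rw [e1, e2, Equiv.swap_apply_left]
            · rw [if_neg hj2, if_neg (show ¬(j+1+2 ≤ i) by omega)]
              show Equiv.swap _ _ (M' (Equiv.swap _ _ (x (j+2)))) = x (j+1+2)
              rw [hfix (j+2) (by omega) (by omega) (by omega),
                hM'e (j+2) (by omega) (by omega)]
              have e1 : j + 1 + 2 = j + 3 := by omega
              rw [e1, hfix (j+3) (by omega) (by omega) (by omega)]
          · rcases Nat.lt_or_ge i 2 with hi1' | hi2
            · have hi1'' : i = 1 := by omega
              rw [if_neg (show ¬(0+2 ≤ i) by omega)]
              show Equiv.swap _ _ (M' (Equiv.swap _ _ (x (0+2)))) = x (0+2)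
              have e1 : (0:ℕ) + 2 = 2 := by norm_num
              rw [e1]
              have e2 : Equiv.swap (x (i-1)) (x (i+1)) (x 2) = x 0 := by
                rw [hi1'']
                exact Equiv.swap_apply_right _ _
              rw [e2, h0]
              rw [hi1'']
              exact Equiv.swap_apply_left _ _
            · rw [if_pos (show 0+2 ≤ i by omega)]
              show Equiv.swap _ _ (M' (Equiv.swap _ _ (x 0))) = x 0
              rw [hfix 0 (by omega) (by omega) (by omega), h0,
                hfix 0 (by omega) (by omega) (by omega)]
          · rw [if_neg (show ¬(n-2+2 ≤ i) by omega)]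
            have e1 : n - 2 + 2 = n := by omega
            rw [e1]
            show Equiv.swap _ _ (M' (Equiv.swap _ _ (x n))) = x n
            rw [hfix n (by omega) (by omega) (by omega), hnn,
              hfix n (by omega) (by omega) (by omega)]
    -- final contradiction using claim at n-1
    have hfin := claim (n-1) (by omega) (by omega)
    rw [show n - 1 + 1 = n by omega, show n - 1 - 1 = n - 2 by omega] at hfin
    have hM'a : M' (x (n-1)) = x (n-2) := by
      have h1 : M' (x (n-2)) = x (n-1) := by
        have := hM'e (n-2) (by omega) (by omega)
        rwa [show n - 2 + 1 = n - 1 by omega] at this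
      rw [← h1, hM'i]
    have hMb : M (x n) = x (n-1) := by
      have h1 : M (x (n-1)) = x n := by
        have := hMe (n-1) (by omega) (by omega)
        rwa [show n - 1 + 1 = n by omega] at this
      rw [← h1, hMi]
    apply cstabM'
    refine ⟨x (n-1), x n, hdist (n-1) n (by omega) (by omega), ?_, ?_, ?_⟩
    · rw [hM'a]; exact hdist (n-2) n (by omega) (by omega)
    · rw [if_neg (by rw [hM'a]; exact hdist (n-2) (n-1) (by omega) (by omega)), hM'a]
      exact hfin
    · rw [if_pos hnn]
      have := caccM (x n) (by rw [hMb]; exact hdist (n-1) n (by omega) (by omega))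
      rwa [hMb] at this

def walk (M M' : Agent → Agent) (a : Agent) : ℕ → Agent
  | 0 => a
  | j + 1 => if j % 2 = 0 then M (walk M M' a j) else M' (walk M M' a j)

lemma walk_succ (M M' : Agent → Agent) (a : Agent) (j : ℕ) :
    walk M M' a (j+1) = if j % 2 = 0 then M (walk M M' a j) else M' (walk M M' a j) := rfl

lemma walk_zero (M M' : Agent → Agent) (a : Agent) : walk M M' a 0 = a := rfl

section walkfacts

variable (M M' : Agent → Agent) (a : Agent)
  (hMi : ∀ b, M (M b) = b) (hM'i : ∀ b, M' (M' b) = b)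
  (ha : M a ≠ a) (ha' : M' a = a)

include hMi hM'i ha ha'

lemma walk_nb : ∀ j, walk M M' a (j+2) ≠ walk M M' a j := by
  intro j
  induction j with
  | zero =>
    intro h
    have h1 : walk M M' a 1 = M a := by rw [walk_succ]; simp [walk_zero]
    have h2 : walk M M' a 2 = M' (walk M M' a 1) := by rw [walk_succ]; simp
    rw [h2, h1] at h
    -- h : M' (M a) = a
    apply ha
    have : M a = M' a := by
      conv_lhs => rw [← hM'i (M a), h]
      exact ha'.symm ▸ rfl
    rw [this, ha']
  | succ j IHj =>
    intro h
    -- h : walk (j+3) = walk (j+1)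
    apply IHj
    -- selector at steps j and j+2 agree
    rcases Nat.mod_two_eq_zero_or_one j with hp | hp
    · have e1 : walk M M' a (j+1) = M (walk M M' a j) := by rw [walk_succ, if_pos hp]
      have e2 : walk M M' a (j+3) = M (walk M M' a (j+2)) := by
        rw [show j+3 = (j+2)+1 by ring, walk_succ, if_pos (by omega)]
      rw [e2, e1] at h
      -- M (walk (j+2)) = M (walk j) -> apply M
      have := congrArg M h
      rwa [hMi, hMi] at this
    · have e1 : walk M M' a (j+1) = M' (walk M M' a j) := by rw [walk_succ, if_neg (by omega)]
      have e2 : walk M M' a (j+3) = M' (walk M M' a (j+2)) := by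
        rw [show j+3 = (j+2)+1 by ring, walk_succ, if_neg (by omega)]
      rw [e2, e1] at h
      have := congrArg M' h
      rwa [hM'i, hM'i] at this

lemma walk_inj : ∀ q, (∀ i < q, walk M M' a (i+1) ≠ walk M M' a i) →
    ∀ p, p < q → walk M M' a p ≠ walk M M' a q := by
  intro q
  induction q using Nat.strong_induction_on with
  | _ q IH =>
  intro halive p hpq heq
  rcases Nat.lt_or_ge p (q-1) with hp1 | hp1
  swap
  · -- q = p+1
    have : q = p + 1 := by omega
    subst this
    exact halive p (by omega) heq.symm
  rcases Nat.lt_or_ge p (q-2) with hp2 | hp2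
  swap
  · -- q = p+2
    have : q = p + 2 := by omega
    subst this
    exact walk_nb M M' a hMi hM'i ha ha' p heq.symm
  -- q ≥ p+3, in particular q ≥ 3
  have hq3 : p + 3 ≤ q := by omega
  have hwq : walk M M' a q =
      if (q-1) % 2 = 0 then M (walk M M' a (q-1)) else M' (walk M M' a (q-1)) := by
    rw [← walk_succ, show q - 1 + 1 = q by omega]
  rcases Nat.eq_zero_or_pos p with rfl | hp0
  · -- p = 0 : walk q = a
    rcases Nat.mod_two_eq_zero_or_one (q-1) with hqp | hqp
    · rw [if_pos hqp] at hwq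
      -- M (walk (q-1)) = a, so walk (q-1) = M a = walk 1
      have h1 : walk M M' a (q-1) = walk M M' a 1 := by
        have : M (walk M M' a (q-1)) = a := by rw [← hwq]; exact heq.symm
        have := congrArg M this
        rw [hMi] at this
        rw [this, walk_succ]; simp [walk_zero]
      exact IH (q-1) (by omega) (fun i hi => halive i (by omega)) 1 (by omega) h1.symm
    · rw [if_neg (by omega)] at hwq
      have h1 : walk M M' a (q-1) = walk M M' a 0 := by
        have : M' (walk M M' a (q-1)) = a := by rw [← hwq]; exact heq.symm
        have := congrArg M' this
        rw [hM'i, ha'] at this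
        exact this
      exact IH (q-1) (by omega) (fun i hi => halive i (by omega)) 0 (by omega) h1.symm
  · -- p ≥ 1
    have hwp : walk M M' a p =
        if (p-1) % 2 = 0 then M (walk M M' a (p-1)) else M' (walk M M' a (p-1)) := by
      rw [← walk_succ, show p - 1 + 1 = p by omega]
    by_cases hsame : (p-1) % 2 = (q-1) % 2
    case neg =>
      -- different parities: use out-edge at p
      have hpar : p % 2 = (q-1) % 2 := by omega
      have hwp1 : walk M M' a (p+1) =
          if p % 2 = 0 then M (walk M M' a p) else M' (walk M M' a p) := walk_succ ..
      have key : walk M M' a (p+1) = walk M M' a (q-1) := by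
        rcases Nat.mod_two_eq_zero_or_one p with hpp | hpp
        · rw [if_pos hpp] at hwp1
          rw [if_pos (by omega)] at hwq
          rw [hwp1, heq, hwq, hMi]
        · rw [if_neg (by omega)] at hwp1
          rw [if_neg (by omega)] at hwq
          rw [hwp1, heq, hwq, hM'i]
      exact IH (q-1) (by omega) (fun i hi => halive i (by omega)) (p+1) (by omega) key
    case pos =>
      -- same parity: in-edges
      have key : walk M M' a (p-1) = walk M M' a (q-1) := by
        rcases Nat.mod_two_eq_zero_or_one (q-1) with hqp | hqp
        · rw [if_pos hqp] at hwq
          rw [if_pos (by omega)] at hwp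
          have h1 : M (walk M M' a (p-1)) = M (walk M M' a (q-1)) := by
            rw [← hwp, ← hwq, heq]
          have := congrArg M h1
          rwa [hMi, hMi] at this
        · rw [if_neg (by omega)] at hwq
          rw [if_neg (by omega)] at hwp
          have h1 : M' (walk M M' a (p-1)) = M' (walk M M' a (q-1)) := by
            rw [← hwp, ← hwq, heq]
          have := congrArg M' h1
          rwa [hM'i, hM'i] at this
      exact IH (q-1) (by omega) (fun i hi => halive i (by omega)) (p-1) (by omega) key

lemma walk_stops : ∃ j, walk M M' a (j+1) = walk M M' a j := by
  by_contra h
  push_neg at h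
  obtain ⟨p, q, hne, he⟩ := Finite.exists_ne_map_eq_of_infinite (walk M M' a)
  rcases Nat.lt_or_ge p q with hlt | hge
  · exact walk_inj M M' a hMi hM'i ha ha' q (fun i _ => h i) p hlt he
  · exact walk_inj M M' a hMi hM'i ha ha' p (fun i _ => h i) q (by omega) he.symm

lemma walk_rev (m : ℕ) (hme : m % 2 = 0) :
    ∀ j, j ≤ m → walk M' M (walk M M' a m) j = walk M M' a (m - j) := by
  intro j
  induction j with
  | zero => intro _; simp [walk_zero]
  | succ j IHj =>
    intro hj
    have hIH := IHj (by omega)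
    have hstep : walk M M' a (m - j) =
        if (m-j-1) % 2 = 0 then M (walk M M' a (m-j-1)) else M' (walk M M' a (m-j-1)) := by
      rw [← walk_succ, show m - j - 1 + 1 = m - j by omega]
    have hv : walk M' M (walk M M' a m) (j+1) =
        if j % 2 = 0 then M' (walk M' M (walk M M' a m) j)
        else M (walk M' M (walk M M' a m) j) := walk_succ ..
    rcases Nat.mod_two_eq_zero_or_one j with hp | hp
    · rw [if_pos hp] at hv
      rw [if_neg (by omega)] at hstep
      rw [hv, hIH, hstep, hM'i, show m - j - 1 = m - (j+1) by omega]
    · rw [if_neg (by omega)] at hv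
      rw [if_pos (by omega)] at hstep
      rw [hv, hIH, hstep, hMi, show m - j - 1 = m - (j+1) by omega]

end walkfacts

lemma endpoint_facts (typeOf : Agent → ℕ) (trank : ℕ → ℕ → ℕ) (k : ℕ)
    (htype : ∀ a, typeOf a < k)
    (hstrict : ∀ i j l, i < k → j < k → l < k → j ≠ l →
        trank i j < trank i k → trank i l < trank i k → trank i j ≠ trank i l)
    (M M' : Agent → Agent)
    (hMi : ∀ b, M (M b) = b) (hM'i : ∀ b, M' (M' b) = b)
    (caccM : CAcc typeOf trank k M) (caccM' : CAcc typeOf trank k M')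
    (cstabM : CStab typeOf trank k M) (cstabM' : CStab typeOf trank k M')
    (a : Agent) (ha : M a ≠ a) (ha' : M' a = a)
    (m : ℕ) (hm : m = Nat.find (walk_stops M M' a hMi hM'i ha ha')) :
    M (walk M M' a m) = walk M M' a m ∧ M' (walk M M' a m) ≠ walk M M' a m ∧
    walk M' M (walk M M' a m) m = a ∧
    ∀ (H : ∃ j, walk M' M (walk M M' a m) (j+1) = walk M' M (walk M M' a m) j),
      Nat.find H = m := by
  have hstop : walk M M' a (m+1) = walk M M' a m := by
    rw [hm]; exact Nat.find_spec (walk_stops M M' a hMi hM'i ha ha')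
  have hmin : ∀ i, i < m → walk M M' a (i+1) ≠ walk M M' a i := by
    intro i hi
    exact Nat.find_min (walk_stops M M' a hMi hM'i ha ha') (hm ▸ hi)
  have hm0 : m ≠ 0 := by
    intro h0
    rw [h0] at hstop
    have h1 : walk M M' a 1 = M a := by rw [walk_succ]; simp [walk_zero]
    rw [h1, walk_zero] at hstop
    exact ha hstop
  have hme : m % 2 = 0 := by
    rcases Nat.mod_two_eq_zero_or_one m with h | h
    · exact h
    exfalso
    apply no_bad_path typeOf trank k htype hstrict m h M M' (walk M M' a)
      hMi hM'i caccM caccM' cstabM cstabM'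
    · intro p q hpq hq
      exact walk_inj M M' a hMi hM'i ha ha' q (fun i hi => hmin i (by omega)) p hpq
    · intro j hj hjp
      rw [walk_succ, if_pos hjp]
    · intro j hj hjp
      rw [walk_succ, if_neg (by omega)]
    · rw [walk_zero]; exact ha'
    · have h2 : walk M M' a (m+1) = M' (walk M M' a m) := by
        rw [walk_succ, if_neg (by omega)]
      rw [← h2, hstop]
  have hMb : M (walk M M' a m) = walk M M' a m := by
    have h2 : walk M M' a (m+1) = M (walk M M' a m) := by
      rw [walk_succ, if_pos hme]
    rw [← h2, hstop]
  have hstep' : walk M M' a m = M' (walk M M' a (m-1)) := by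
    have h2 := walk_succ M M' a (m-1)
    rw [show m - 1 + 1 = m by omega, if_neg (by omega)] at h2
    exact h2
  have hM'b : M' (walk M M' a m) ≠ walk M M' a m := by
    intro h
    have h2 : M' (walk M M' a m) = walk M M' a (m-1) := by rw [hstep', hM'i]
    rw [h2] at h
    apply hmin (m-1) (by omega)
    rw [show m - 1 + 1 = m by omega]
    exact h.symm
  have hrev := walk_rev M M' a hMi hM'i ha ha' m hme
  have hva : walk M' M (walk M M' a m) m = a := by
    rw [hrev m le_rfl, Nat.sub_self, walk_zero]
  refine ⟨hMb, hM'b, hva, ?_⟩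
  intro H
  rw [Nat.find_eq_iff]
  constructor
  · have h1 : walk M' M (walk M M' a m) (m+1) = M' (walk M' M (walk M M' a m) m) := by
      rw [walk_succ, if_pos hme]
    rw [h1, hva, ha']
  · intro i hi hPi
    have e1 : walk M' M (walk M M' a m) (i+1) = walk M M' a (m - (i+1)) := hrev (i+1) (by omega)
    have e2 : walk M' M (walk M M' a m) i = walk M M' a (m - i) := hrev i (by omega)
    rw [e1, e2] at hPi
    apply hmin (m - i - 1) (by omega)
    rw [show m - i - 1 + 1 = m - i by omega]
    rw [show m - (i+1) = m - i - 1 by omega] at hPi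
    exact hPi.symm

lemma card_le_aux (typeOf : Agent → ℕ) (trank : ℕ → ℕ → ℕ) (k : ℕ)
    (htype : ∀ a, typeOf a < k)
    (hstrict : ∀ i j l, i < k → j < k → l < k → j ≠ l →
        trank i j < trank i k → trank i l < trank i k → trank i j ≠ trank i l)
    (M M' : Agent → Agent)
    (hMi : ∀ b, M (M b) = b) (hM'i : ∀ b, M' (M' b) = b)
    (caccM : CAcc typeOf trank k M) (caccM' : CAcc typeOf trank k M')
    (cstabM : CStab typeOf trank k M) (cstabM' : CStab typeOf trank k M') :
    (Finset.univ.filter fun a => M a ≠ a ∧ M' a = a).card ≤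
    (Finset.univ.filter fun a : Agent => M a = a ∧ M' a ≠ a).card := by
  classical
  apply Finset.card_le_card_of_injOn (fun a =>
    if h : M a ≠ a ∧ M' a = a then
      walk M M' a (Nat.find (walk_stops M M' a hMi hM'i h.1 h.2)) else a)
  · intro a haf
    simp only [Finset.mem_coe, Finset.mem_filter, Finset.mem_univ, true_and] at haf ⊢
    rw [dif_pos haf]
    obtain ⟨h1, h2, -, -⟩ := endpoint_facts typeOf trank k htype hstrict M M' hMi hM'i
      caccM caccM' cstabM cstabM' a haf.1 haf.2 _ rfl
    exact ⟨h1, h2⟩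
  · intro a haf a' ha'f heq
    simp only [Finset.coe_filter, Set.mem_setOf_eq, Finset.mem_univ, true_and] at haf ha'f
    dsimp only at heq
    rw [dif_pos haf, dif_pos ha'f] at heq
    obtain ⟨h1, h2, h3, h4⟩ := endpoint_facts typeOf trank k htype hstrict M M' hMi hM'i
      caccM caccM' cstabM cstabM' a haf.1 haf.2 _ rfl
    obtain ⟨h1', h2', h3', h4'⟩ := endpoint_facts typeOf trank k htype hstrict M M' hMi hM'i
      caccM caccM' cstabM cstabM' a' ha'f.1 ha'f.2 _ rfl
    set m := Nat.find (walk_stops M M' a hMi hM'i haf.1 haf.2) with hmdef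
    set m' := Nat.find (walk_stops M M' a' hMi hM'i ha'f.1 ha'f.2) with hm'def
    rw [heq] at h3 h4
    have hmm : m = m' :=
      (h4 (walk_stops M' M (walk M M' a' m') hM'i hMi h2' h1')).symm.trans (h4' _)
    rw [hmm] at h3
    exact h3.symm.trans h3'

theorem main (k : ℕ) (typeOf : Agent → ℕ) (htype : ∀ a, typeOf a < k)
    (trank : ℕ → ℕ → ℕ)
    (arank : Agent → Agent → ℕ) (dthr : Agent → ℕ)
    (hcross : ∀ x z w, z ≠ x → w ≠ x → typeOf z ≠ typeOf w →
        (arank x z < arank x w ↔ trank (typeOf x) (typeOf z) < trank (typeOf x) (typeOf w)))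
    (hdummy : ∀ x z, z ≠ x →
        (arank x z < dthr x ↔ trank (typeOf x) (typeOf z) < trank (typeOf x) k))
    (hstrict : ∀ i j l, i < k → j < k → l < k → j ≠ l →
        trank i j < trank i k → trank i l < trank i k → trank i j ≠ trank i l)
    (M M' : Agent → Agent)
    (hinv : ∀ a, M (M a) = a) (hinv' : ∀ a, M' (M' a) = a)
    (hacc : ∀ a, M a ≠ a → arank a (M a) < dthr a)
    (hacc' : ∀ a, M' a ≠ a → arank a (M' a) < dthr a)
    (hstab : ¬ ∃ a b : Agent, a ≠ b ∧ M a ≠ b ∧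
        (if M a = a then arank a b < dthr a else arank a b < arank a (M a)) ∧
        (if M b = b then arank b a < dthr b else arank b a < arank b (M b)))
    (hstab' : ¬ ∃ a b : Agent, a ≠ b ∧ M' a ≠ b ∧
        (if M' a = a then arank a b < dthr a else arank a b < arank a (M' a)) ∧
        (if M' b = b then arank b a < dthr b else arank b a < arank b (M' b))) :
    (Finset.univ.filter fun a => M a ≠ a).card =
      (Finset.univ.filter fun a => M' a ≠ a).card := by
  classical
  have caccM : CAcc typeOf trank k M := fun a ha => (hdummy a (M a) ha).mp (hacc a ha)
  have caccM' : CAcc typeOf trank k M' := fun a ha => (hdummy a (M' a) ha).mp (hacc' a ha)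
  have side : ∀ (N : Agent → Agent) (a b : Agent), a ≠ b →
      (if N a = a then trank (typeOf a) (typeOf b) < trank (typeOf a) k
       else trank (typeOf a) (typeOf b) < trank (typeOf a) (typeOf (N a))) →
      (if N a = a then arank a b < dthr a else arank a b < arank a (N a)) := by
    intro N a b hab hc
    by_cases hNa : N a = a
    · rw [if_pos hNa]; rw [if_pos hNa] at hc
      exact (hdummy a b (Ne.symm hab)).mpr hc
    · rw [if_neg hNa]; rw [if_neg hNa] at hc
      have hne : typeOf b ≠ typeOf (N a) := by
        intro he; rw [he] at hc; exact lt_irrefl _ hc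
      exact (hcross a b (N a) (Ne.symm hab) hNa hne).mpr hc
  have cstabM : CStab typeOf trank k M := by
    rintro ⟨a, b, hab, hMab, hca, hcb⟩
    exact hstab ⟨a, b, hab, hMab, side M a b hab hca, side M b a hab.symm hcb⟩
  have cstabM' : CStab typeOf trank k M' := by
    rintro ⟨a, b, hab, hMab, hca, hcb⟩
    exact hstab' ⟨a, b, hab, hMab, side M' a b hab hca, side M' b a hab.symm hcb⟩
  have hle1 := card_le_aux typeOf trank k htype hstrict M M' hinv hinv'
    caccM caccM' cstabM cstabM'
  have hle2 := card_le_aux typeOf trank k htype hstrict M' M hinv' hinv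
    caccM' caccM cstabM' cstabM
  have hle2' : (Finset.univ.filter fun a : Agent => M a = a ∧ M' a ≠ a).card ≤
      (Finset.univ.filter fun a : Agent => M a ≠ a ∧ M' a = a).card := by
    have e1 : (Finset.univ.filter fun a : Agent => M a = a ∧ M' a ≠ a) =
        (Finset.univ.filter fun a : Agent => M' a ≠ a ∧ M a = a) := by
      ext a; simp only [Finset.mem_filter]; tauto
    have e2 : (Finset.univ.filter fun a : Agent => M' a = a ∧ M a ≠ a) =
        (Finset.univ.filter fun a : Agent => M a ≠ a ∧ M' a = a) := by
      ext a; simp only [Finset.mem_filter]; tauto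
    rw [e1, ← e2]; exact hle2
  have hAB : (Finset.univ.filter fun a => M a ≠ a ∧ M' a = a).card =
      (Finset.univ.filter fun a : Agent => M a = a ∧ M' a ≠ a).card :=
    le_antisymm hle1 hle2' 
  -- split cards
  have split1 : (Finset.univ.filter fun a => M a ≠ a).card =
      (Finset.univ.filter fun a : Agent => M a ≠ a ∧ M' a ≠ a).card +
      (Finset.univ.filter fun a : Agent => M a ≠ a ∧ M' a = a).card := by
    have h := Finset.card_filter_add_card_filter_not
      (s := Finset.univ.filter fun a : Agent => M a ≠ a) (p := fun a => M' a ≠ a)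
    rw [Finset.filter_filter, Finset.filter_filter] at h
    have e : (Finset.univ.filter fun a : Agent => M a ≠ a ∧ ¬ M' a ≠ a) =
        (Finset.univ.filter fun a : Agent => M a ≠ a ∧ M' a = a) := by
      ext a; simp only [Finset.mem_filter, not_not]
    rw [e] at h
    omega
  have split2 : (Finset.univ.filter fun a => M' a ≠ a).card =
      (Finset.univ.filter fun a : Agent => M' a ≠ a ∧ M a ≠ a).card +
      (Finset.univ.filter fun a : Agent => M' a ≠ a ∧ M a = a).card := by
    have h := Finset.card_filter_add_card_filter_not
      (s := Finset.univ.filter fun a : Agent => M' a ≠ a) (p := fun a => M a ≠ a)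
    rw [Finset.filter_filter, Finset.filter_filter] at h
    have e : (Finset.univ.filter fun a : Agent => M' a ≠ a ∧ ¬ M a ≠ a) =
        (Finset.univ.filter fun a : Agent => M' a ≠ a ∧ M a = a) := by
      ext a; simp only [Finset.mem_filter, not_not]
    rw [e] at h
    omega
  have comm1 : (Finset.univ.filter fun a : Agent => M' a ≠ a ∧ M a ≠ a).card =
      (Finset.univ.filter fun a : Agent => M a ≠ a ∧ M' a ≠ a).card := by
    congr 1; ext a; simp only [Finset.mem_filter]; tauto
  have comm2 : (Finset.univ.filter fun a : Agent => M' a ≠ a ∧ M a = a).card =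
      (Finset.univ.filter fun a : Agent => M a = a ∧ M' a ≠ a).card := by
    congr 1; ext a; simp only [Finset.mem_filter]; tauto
  omega


end SRTI7

/-- In a consistently-refined-typed instance of SRTI in which every
type's preference ordering over types is strict (no type is indifferent between two
distinct acceptable types), all stable matchings have the same cardinality. -/
theorem refined_typed_srti_strict_same_size
    {Agent : Type} [Fintype Agent] [DecidableEq Agent]
    (k : ℕ) (typeOf : Agent → ℕ) (htype : ∀ a, typeOf a < k)
    (trank : ℕ → ℕ → ℕ)
    (arank : Agent → Agent → ℕ) (dthr : Agent → ℕ)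
    (hsame : ∀ x y z, typeOf x = typeOf y → z ≠ x → z ≠ y → arank x z = arank y z)
    (hsamed : ∀ x y, typeOf x = typeOf y → dthr x = dthr y)
    (hcross : ∀ x z w, z ≠ x → w ≠ x → typeOf z ≠ typeOf w →
        (arank x z < arank x w ↔ trank (typeOf x) (typeOf z) < trank (typeOf x) (typeOf w)))
    (hdummy : ∀ x z, z ≠ x →
        (arank x z < dthr x ↔ trank (typeOf x) (typeOf z) < trank (typeOf x) k))
    -- preferences over types are strict
    (hstrict : ∀ i j l, i < k → j < k → l < k → j ≠ l →
        trank i j < trank i k → trank i l < trank i k → trank i j ≠ trank i l)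
    (M M' : Agent → Agent)
    (hinv : ∀ a, M (M a) = a) (hinv' : ∀ a, M' (M' a) = a)
    (hacc : ∀ a, M a ≠ a → arank a (M a) < dthr a)
    (hacc' : ∀ a, M' a ≠ a → arank a (M' a) < dthr a)
    (hstab : ¬ ∃ a b : Agent, a ≠ b ∧ M a ≠ b ∧
        (if M a = a then arank a b < dthr a else arank a b < arank a (M a)) ∧
        (if M b = b then arank b a < dthr b else arank b a < arank b (M b)))
    (hstab' : ¬ ∃ a b : Agent, a ≠ b ∧ M' a ≠ b ∧
        (if M' a = a then arank a b < dthr a else arank a b < arank a (M' a)) ∧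
        (if M' b = b then arank b a < dthr b else arank b a < arank b (M' b))) :
    (Finset.univ.filter fun a => M a ≠ a).card =
      (Finset.univ.filter fun a => M' a ≠ a).card := by
  exact SRTI7.main k typeOf htype trank arank dthr hcross hdummy hstrict
    M M' hinv hinv' hacc hacc' hstab hstab'
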